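/- Let H be a complex Hilbert space, A a positive bounded operator, T, S bounded operators admitting A-adjoints. Then w_A(S^♯T)² ≤ (1/2) ‖(T^♯T)² + (S^♯S)²‖_A, where w_A(R) = sup{|⟨Rx,x⟩_A| : ‖x‖_A = 1}. -/

import Mathlib

open scoped InnerProductSpace

variable {H : Type*} [NormedAddCommGroup H] [InnerProductSpace ℂ H] [CompleteSpace H]

/-- The `A`-semi-inner product `⟪x, y⟫_A = ⟪A x, y⟫`. -/
noncomputable def ipA (A : H →L[ℂ] H) (x y : H) : ℂ := ⟪A x, y⟫_ℂ

/-- The `A`-semi-norm `‖x‖_A = √(re ⟪A x, x⟫)`. -/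
noncomputable def nA (A : H →L[ℂ] H) (x : H) : ℝ := Real.sqrt (ipA A x x).re

/-- The `A`-numerical radius. -/
noncomputable def wA (A T : H →L[ℂ] H) : ℝ :=
  sSup {c : ℝ | ∃ x : H, nA A x = 1 ∧ c = ‖ipA A (T x) x‖}

/-- The `A`-operator seminorm. -/
noncomputable def opA (A T : H →L[ℂ] H) : ℝ :=
  sSup {c : ℝ | ∃ x : H, nA A x = 1 ∧ c = nA A (T x)}

section Aux

variable (A : H →L[ℂ] H)

lemma ipA_symm (hA : A.IsPositive) (x y : H) :
    (starRingEnd ℂ) (ipA A x y) = ipA A y x := by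
  have hs : ∀ u v : H, ⟪A u, v⟫_ℂ = ⟪u, A v⟫_ℂ := by
    intro u v
    exact hA.isSymmetric u v
  simp only [ipA]
  rw [inner_conj_symm, hs]

lemma ipA_re_nonneg (hA : A.IsPositive) (x : H) : 0 ≤ (ipA A x x).re := hA.2 x

lemma nA_nonneg (x : H) : 0 ≤ nA A x := Real.sqrt_nonneg _

lemma nA_sq (hA : A.IsPositive) (x : H) : nA A x ^ 2 = (ipA A x x).re :=
  Real.sq_sqrt (ipA_re_nonneg A hA x)

/-- The positive semi-definite core structure induced by `A`. -/
noncomputable def coreA (hA : A.IsPositive) : PreInnerProductSpace.Core ℂ H where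
  inner := ipA A
  conj_inner_symm x y := ipA_symm A hA y x
  re_inner_nonneg x := hA.2 x
  add_left x y z := by simp [ipA, inner_add_left]
  smul_left x y r := by simp [ipA, inner_smul_left, mul_comm]

/-- Cauchy–Schwarz for the `A`-semi-inner product. -/
lemma ipA_abs_le (hA : A.IsPositive) (x y : H) :
    ‖ipA A x y‖ ≤ nA A x * nA A y := by
  have h : ‖ipA A x y‖ * ‖ipA A y x‖ ≤ (ipA A x x).re * (ipA A y y).re :=
    @InnerProductSpace.Core.inner_mul_inner_self_le ℂ H _ _ _ (coreA A hA) x y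
  have hnorm : ‖ipA A y x‖ = ‖ipA A x y‖ := by
    rw [← ipA_symm A hA x y, RCLike.norm_conj]
  rw [hnorm, ← sq] at h
  have h2 : ‖ipA A x y‖ ^ 2 ≤ (nA A x * nA A y) ^ 2 := by
    rw [mul_pow, nA_sq A hA, nA_sq A hA]; exact h
  nlinarith [norm_nonneg (ipA A x y), mul_nonneg (nA_nonneg A x) (nA_nonneg A y)]

lemma nA_le_norm (hA : A.IsPositive) (y : H) :
    nA A y ≤ Real.sqrt ‖A‖ * ‖y‖ := by
  have h1 : (ipA A y y).re ≤ ‖A‖ * ‖y‖ ^ 2 := by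
    calc (ipA A y y).re ≤ ‖ipA A y y‖ := Complex.re_le_norm _
    _ ≤ ‖A y‖ * ‖y‖ := norm_inner_le_norm _ _
    _ ≤ ‖A‖ * ‖y‖ * ‖y‖ :=
        mul_le_mul_of_nonneg_right (A.le_opNorm y) (norm_nonneg y)
    _ = ‖A‖ * ‖y‖ ^ 2 := by ring
  calc nA A y = Real.sqrt (ipA A y y).re := rfl
  _ ≤ Real.sqrt (‖A‖ * ‖y‖ ^ 2) := Real.sqrt_le_sqrt h1
  _ = Real.sqrt ‖A‖ * ‖y‖ := by
      rw [Real.sqrt_mul (norm_nonneg A), Real.sqrt_sq (norm_nonneg y)]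

/-- One Cauchy–Schwarz step for an `A`-selfadjoint operator. -/
lemma nA_step (hA : A.IsPositive) (Q : H →L[ℂ] H)
    (hQ : ∀ x y : H, ipA A (Q x) y = ipA A x (Q y)) (x : H) :
    nA A (Q x) ^ 2 ≤ nA A x * nA A (Q (Q x)) := by
  have : nA A (Q x) ^ 2 = (ipA A x (Q (Q x))).re := by
    rw [nA_sq A hA, ← hQ x (Q x)]
  rw [this]
  calc (ipA A x (Q (Q x))).re ≤ ‖ipA A x (Q (Q x))‖ := Complex.re_le_norm _
  _ ≤ nA A x * nA A (Q (Q x)) := ipA_abs_le A hA x _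

lemma ipA_pow (Q : H →L[ℂ] H)
    (hQ : ∀ x y : H, ipA A (Q x) y = ipA A x (Q y)) (k : ℕ) :
    ∀ x y : H, ipA A ((Q ^ k) x) y = ipA A x ((Q ^ k) y) := by
  induction k with
  | zero => intro x y; simp
  | succ n ih =>
      intro x y
      have h1 : Q ^ (n + 1) = Q ^ n * Q := pow_succ Q n
      rw [h1]
      simp only [ContinuousLinearMap.mul_apply]
      rw [ih (Q x) y, hQ x ((Q ^ n) y)]
      congr 1
      have h2 : Q * Q ^ n = Q ^ n * Q := (Commute.self_pow Q n).eq
      calc Q ((Q ^ n) y) = (Q * Q ^ n) y := rfl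
      _ = (Q ^ n * Q) y := by rw [h2]
      _ = (Q ^ n) (Q y) := rfl

/-- An operator that is `A`-selfadjoint is `A`-bounded by its norm on the
`A`-unit sphere. -/
lemma nA_apply_le (hA : A.IsPositive) (Q : H →L[ℂ] H)
    (hQ : ∀ x y : H, ipA A (Q x) y = ipA A x (Q y)) (x : H) (hx : nA A x = 1) :
    nA A (Q x) ≤ ‖Q‖ := by
  have key : ∀ n : ℕ, nA A (Q x) ^ 2 ^ n ≤ nA A ((Q ^ 2 ^ n) x) := by
    intro n
    induction n with
    | zero => simp [pow_one]
    | succ n ih =>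
        have hpos : 0 ≤ nA A ((Q ^ 2 ^ n) x) := nA_nonneg A _
        have h1 : nA A (Q x) ^ 2 ^ (n + 1) = (nA A (Q x) ^ 2 ^ n) ^ 2 := by
          rw [← pow_mul, pow_succ]
        rw [h1]
        calc (nA A (Q x) ^ 2 ^ n) ^ 2 ≤ nA A ((Q ^ 2 ^ n) x) ^ 2 :=
              pow_le_pow_left₀ (pow_nonneg (nA_nonneg A _) _) ih 2
        _ ≤ nA A x * nA A ((Q ^ 2 ^ n) ((Q ^ 2 ^ n) x)) :=
              nA_step A hA _ (ipA_pow A Q hQ _) x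
        _ = nA A ((Q ^ 2 ^ (n + 1)) x) := by
              rw [hx, one_mul]
              congr 1
              have : Q ^ 2 ^ (n + 1) = Q ^ 2 ^ n * Q ^ 2 ^ n := by
                rw [← pow_add, pow_succ, mul_two]
              rw [this]; rfl
  have bound : ∀ n : ℕ, nA A (Q x) ^ 2 ^ n ≤ ‖Q‖ ^ 2 ^ n * (Real.sqrt ‖A‖ * ‖x‖) := by
    intro n
    calc nA A (Q x) ^ 2 ^ n ≤ nA A ((Q ^ 2 ^ n) x) := key n
    _ ≤ Real.sqrt ‖A‖ * ‖(Q ^ 2 ^ n) x‖ := nA_le_norm A hA _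
    _ ≤ Real.sqrt ‖A‖ * (‖Q ^ 2 ^ n‖ * ‖x‖) :=
        mul_le_mul_of_nonneg_left ((Q ^ 2 ^ n).le_opNorm x) (Real.sqrt_nonneg _)
    _ ≤ Real.sqrt ‖A‖ * (‖Q‖ ^ 2 ^ n * ‖x‖) := by
        apply mul_le_mul_of_nonneg_left _ (Real.sqrt_nonneg _)
        exact mul_le_mul_of_nonneg_right (norm_pow_le' Q (pow_pos two_pos n))
          (norm_nonneg x)
    _ = ‖Q‖ ^ 2 ^ n * (Real.sqrt ‖A‖ * ‖x‖) := by ring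
  by_contra hcon
  push_neg at hcon
  rcases eq_or_lt_of_le (norm_nonneg Q) with hb | hb
  · -- ‖Q‖ = 0, so Q = 0
    have : Q = 0 := by rwa [eq_comm, norm_eq_zero] at hb
    rw [this] at hcon
    simp only [ContinuousLinearMap.zero_apply] at hcon
    have : nA A (0 : H) = 0 := by simp [nA, ipA]
    rw [this] at hcon
    exact absurd hcon (not_lt.2 (norm_nonneg _))
  · set r : ℝ := nA A (Q x) / ‖Q‖ with hr
    have hr1 : 1 < r := (one_lt_div hb).2 hcon
    obtain ⟨n, hn⟩ := pow_unbounded_of_one_lt (Real.sqrt ‖A‖ * ‖x‖) hr1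
    have h1 : r ^ n ≤ r ^ 2 ^ n := pow_le_pow_right₀ hr1.le (Nat.lt_two_pow_self (n := n)).le
    have h2 : r ^ 2 ^ n ≤ Real.sqrt ‖A‖ * ‖x‖ := by
      rw [hr, div_pow, div_le_iff₀ (pow_pos hb _)]
      calc nA A (Q x) ^ 2 ^ n ≤ ‖Q‖ ^ 2 ^ n * (Real.sqrt ‖A‖ * ‖x‖) := bound n
      _ = Real.sqrt ‖A‖ * ‖x‖ * ‖Q‖ ^ 2 ^ n := by ring
    linarith

end Aux

theorem stmt16 (A : H →L[ℂ] H) (hA : A.IsPositive) (T Ts S Ss : H →L[ℂ] H)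
    (hadjT : ∀ x y : H, ipA A (T x) y = ipA A x (Ts y))
    (hadjS : ∀ x y : H, ipA A (S x) y = ipA A x (Ss y)) :
    wA A (Ss ∘L T) ^ 2 ≤
      (1 / 2) * opA A ((Ts ∘L T) ∘L (Ts ∘L T) + (Ss ∘L S) ∘L (Ss ∘L S)) := by
  set R : H →L[ℂ] H := (Ts ∘L T) ∘L (Ts ∘L T) + (Ss ∘L S) ∘L (Ss ∘L S) with hRdef
  -- flipped adjoint relations
  have hadjT' : ∀ x y : H, ipA A (Ts x) y = ipA A x (T y) := by
    intro x y
    rw [← ipA_symm A hA y (Ts x), ← hadjT y x, ipA_symm A hA (T y) x]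
  have hadjS' : ∀ x y : H, ipA A (Ss x) y = ipA A x (S y) := by
    intro x y
    rw [← ipA_symm A hA y (Ss x), ← hadjS y x, ipA_symm A hA (S y) x]
  -- P = Ts ∘ T and Q = Ss ∘ S are A-selfadjoint
  have hP : ∀ x y : H, ipA A ((Ts ∘L T) x) y = ipA A x ((Ts ∘L T) y) := by
    intro x y
    simp only [ContinuousLinearMap.comp_apply]
    rw [hadjT' (T x) y, hadjT x (T y)]
  have hQ : ∀ x y : H, ipA A ((Ss ∘L S) x) y = ipA A x ((Ss ∘L S) y) := by
    intro x y
    simp only [ContinuousLinearMap.comp_apply]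
    rw [hadjS' (S x) y, hadjS x (S y)]
  -- R is A-selfadjoint
  have hR : ∀ x y : H, ipA A (R x) y = ipA A x (R y) := by
    intro x y
    have e1 : ipA A (R x) y =
        ipA A ((Ts ∘L T) ((Ts ∘L T) x)) y + ipA A ((Ss ∘L S) ((Ss ∘L S) x)) y := by
      simp only [hRdef, ContinuousLinearMap.add_apply, ContinuousLinearMap.comp_apply, ipA,
        map_add, inner_add_left]
    have e2 : ipA A x (R y) =
        ipA A x ((Ts ∘L T) ((Ts ∘L T) y)) + ipA A x ((Ss ∘L S) ((Ss ∘L S) y)) := by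
      simp only [hRdef, ContinuousLinearMap.add_apply, ContinuousLinearMap.comp_apply, ipA,
        inner_add_right]
    rw [e1, e2, hP ((Ts ∘L T) x) y, hP x ((Ts ∘L T) y), hQ ((Ss ∘L S) x) y,
      hQ x ((Ss ∘L S) y)]
  -- the opA set is bounded above
  have hObdd : BddAbove {c : ℝ | ∃ x : H, nA A x = 1 ∧ c = nA A (R x)} := by
    refine ⟨‖R‖, ?_⟩
    rintro c ⟨x, hx, rfl⟩
    exact nA_apply_le A hA R hR x hx
  have hOnonneg : 0 ≤ opA A R := by
    apply Real.sSup_nonneg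
    rintro c ⟨x, hx, rfl⟩
    exact nA_nonneg A _
  -- pointwise bound
  have hpt : ∀ x : H, nA A x = 1 →
      ‖ipA A ((Ss ∘L T) x) x‖ ^ 2 ≤ (1 / 2) * opA A R := by
    intro x hx
    set P := Ts ∘L T with hPdef
    set Q2 := Ss ∘L S with hQdef
    have e1 : ipA A ((Ss ∘L T) x) x = ipA A (T x) (S x) := by
      simp only [ContinuousLinearMap.comp_apply]
      rw [hadjS' (T x) x]
    have cs : ‖ipA A ((Ss ∘L T) x) x‖ ≤ nA A (T x) * nA A (S x) := by
      rw [e1]; exact ipA_abs_le A hA _ _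
    have habs_nonneg : (0 : ℝ) ≤ ‖ipA A ((Ss ∘L T) x) x‖ :=
      norm_nonneg _
    have step1 : ‖ipA A ((Ss ∘L T) x) x‖ ^ 2 ≤
        (nA A (T x)) ^ 2 * (nA A (S x)) ^ 2 := by
      calc ‖ipA A ((Ss ∘L T) x) x‖ ^ 2
          ≤ (nA A (T x) * nA A (S x)) ^ 2 := pow_le_pow_left₀ habs_nonneg cs 2
      _ = (nA A (T x)) ^ 2 * (nA A (S x)) ^ 2 := by ring
    have hT2 : (nA A (T x)) ^ 2 ≤ nA A (P x) := by
      have : (nA A (T x)) ^ 2 = (ipA A x (P x)).re := by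
        rw [nA_sq A hA]
        have := hadjT x (T x)
        simp only [hPdef, ContinuousLinearMap.comp_apply]
        rw [← this]
      rw [this]
      calc (ipA A x (P x)).re ≤ ‖ipA A x (P x)‖ := Complex.re_le_norm _
      _ ≤ nA A x * nA A (P x) := ipA_abs_le A hA _ _
      _ = nA A (P x) := by rw [hx, one_mul]
    have hS2 : (nA A (S x)) ^ 2 ≤ nA A (Q2 x) := by
      have : (nA A (S x)) ^ 2 = (ipA A x (Q2 x)).re := by
        rw [nA_sq A hA]
        have := hadjS x (S x)
        simp only [hQdef, ContinuousLinearMap.comp_apply]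
        rw [← this]
      rw [this]
      calc (ipA A x (Q2 x)).re ≤ ‖ipA A x (Q2 x)‖ := Complex.re_le_norm _
      _ ≤ nA A x * nA A (Q2 x) := ipA_abs_le A hA _ _
      _ = nA A (Q2 x) := by rw [hx, one_mul]
    have step2 : (nA A (T x)) ^ 2 * (nA A (S x)) ^ 2 ≤ nA A (P x) * nA A (Q2 x) := by
      apply mul_le_mul hT2 hS2 (sq_nonneg _) (nA_nonneg A _)
    have amgm : nA A (P x) * nA A (Q2 x) ≤
        (1 / 2) * ((nA A (P x)) ^ 2 + (nA A (Q2 x)) ^ 2) := by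
      nlinarith [sq_nonneg (nA A (P x) - nA A (Q2 x))]
    have sum_eq : (nA A (P x)) ^ 2 + (nA A (Q2 x)) ^ 2 = (ipA A x (R x)).re := by
      have hP2 : (nA A (P x)) ^ 2 = (ipA A x (P (P x))).re := by
        rw [nA_sq A hA, ← hP x (P x)]
      have hQ22 : (nA A (Q2 x)) ^ 2 = (ipA A x (Q2 (Q2 x))).re := by
        rw [nA_sq A hA, ← hQ x (Q2 x)]
      rw [hP2, hQ22]
      have : ipA A x (R x) = ipA A x (P (P x)) + ipA A x (Q2 (Q2 x)) := by
        simp only [hRdef, ContinuousLinearMap.add_apply, ContinuousLinearMap.comp_apply, ipA,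
          inner_add_right]
      rw [this, Complex.add_re]
    have final : (ipA A x (R x)).re ≤ opA A R := by
      calc (ipA A x (R x)).re ≤ ‖ipA A x (R x)‖ := Complex.re_le_norm _
      _ ≤ nA A x * nA A (R x) := ipA_abs_le A hA _ _
      _ = nA A (R x) := by rw [hx, one_mul]
      _ ≤ opA A R := le_csSup hObdd ⟨x, hx, rfl⟩
    calc ‖ipA A ((Ss ∘L T) x) x‖ ^ 2
        ≤ (nA A (T x)) ^ 2 * (nA A (S x)) ^ 2 := step1
    _ ≤ nA A (P x) * nA A (Q2 x) := step2
    _ ≤ (1 / 2) * ((nA A (P x)) ^ 2 + (nA A (Q2 x)) ^ 2) := amgm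
    _ = (1 / 2) * (ipA A x (R x)).re := by rw [sum_eq]
    _ ≤ (1 / 2) * opA A R := by linarith [final]
  -- conclude via sSup
  have hc : 0 ≤ (1 / 2) * opA A R := by linarith
  have hW : wA A (Ss ∘L T) ≤ Real.sqrt ((1 / 2) * opA A R) := by
    apply Real.sSup_le _ (Real.sqrt_nonneg _)
    rintro c ⟨x, hx, rfl⟩
    rw [Real.le_sqrt (norm_nonneg _) hc]
    exact hpt x hx
  have hWnonneg : 0 ≤ wA A (Ss ∘L T) := by
    apply Real.sSup_nonneg
    rintro c ⟨x, hx, rfl⟩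
    exact norm_nonneg _
  calc wA A (Ss ∘L T) ^ 2 ≤ Real.sqrt ((1 / 2) * opA A R) ^ 2 :=
        pow_le_pow_left₀ hWnonneg hW 2
  _ = (1 / 2) * opA A R := Real.sq_sqrt hc
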